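/- Fix x ∈ (0,1) and let w : ℝ₊ → ℝ be absolutely continuous with w(0)=0 and ẇ ∈ L²(ℝ₊). Among all absolutely continuous k : [0,1]×ℝ₊ → ℝ with k(0,t)=k(1,t)=k(y,0)=0 satisfying k(x,t) = √(x(1−x)) w(t) for all t, the minimum of (1/2)∫₀^∞∫₀^1 k̇(y,t)² dy dt equals (1/2)∫₀^∞ ẇ(t)² dt, attained at k(y,t) = √(x(1−x)) w(t) (y/x) for y ≤ x and k(y,t) = √(x(1−x)) w(t) (1−y)/(1−x) for y ≥ x. -/

import Mathlib

set_option maxHeartbeats 1000000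

open MeasureTheory Set Filter

-- square-integrable on finite-measure set implies integrable
lemma int_of_sq {f : ℝ → ℝ} {s : Set ℝ} (hs : volume s ≠ ⊤)
    (hm : AEStronglyMeasurable f (volume.restrict s))
    (hf2 : IntegrableOn (fun t => f t ^ 2) s) : IntegrableOn f s := by
  haveI : IsFiniteMeasure (volume.restrict s) :=
    ⟨by rwa [Measure.restrict_apply_univ, lt_top_iff_ne_top]⟩
  refine Integrable.mono' ((integrable_const 1).add hf2) hm
    (Filter.Eventually.of_forall fun t => ?_)
  simp only [Pi.add_apply, Real.norm_eq_abs]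
  nlinarith [sq_abs (f t), sq_nonneg (|f t| - 1)]

-- Cauchy-Schwarz on an interval
lemma cs_aux {f : ℝ → ℝ} {a b : ℝ} (hab : a < b)
    (hf : IntegrableOn f (Set.Ioc a b))
    (hf2 : IntegrableOn (fun t => f t ^ 2) (Set.Ioc a b)) :
    (∫ t in Set.Ioc a b, f t) ^ 2 ≤ (b - a) * ∫ t in Set.Ioc a b, f t ^ 2 := by
  set I := ∫ t in Set.Ioc a b, f t with hI
  set J := ∫ t in Set.Ioc a b, f t ^ 2 with hJ
  set r := I / (b - a) with hr
  have hm : (0:ℝ) < b - a := by linarith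
  have key : ∫ t in Set.Ioc a b, (f t - r) ^ 2 = J - 2 * r * I + (b - a) * r ^ 2 := by
    have h1 : IntegrableOn (fun t => f t * (2 * r)) (Set.Ioc a b) := hf.mul_const _
    have h2 : IntegrableOn (fun t => f t ^ 2 - f t * (2 * r)) (Set.Ioc a b) := hf2.sub h1
    calc ∫ t in Set.Ioc a b, (f t - r) ^ 2
        = ∫ t in Set.Ioc a b, ((f t ^ 2 - f t * (2 * r)) + r ^ 2) := by
          congr 1; funext t; ring
      _ = (∫ t in Set.Ioc a b, (f t ^ 2 - f t * (2 * r))) + ∫ t in Set.Ioc a b, (r:ℝ) ^ 2 :=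
          integral_add h2 (integrable_const _)
      _ = J - 2 * r * I + (b - a) * r ^ 2 := by
          rw [integral_sub hf2 h1, integral_mul_const, setIntegral_const,
            measureReal_def, Real.volume_Ioc, ENNReal.toReal_ofReal hm.le]
          rw [smul_eq_mul]; field_simp; ring
  have h0 : (0:ℝ) ≤ J - 2 * r * I + (b - a) * r ^ 2 := key ▸ integral_nonneg fun t => sq_nonneg _
  have hrm : r * (b - a) = I := div_mul_cancel₀ _ hm.ne'
  nlinarith [h0, hrm, sq_nonneg (I - r * (b - a))]

lemma aux_ae_zero {φ : ℝ → ℝ} (hloc : ∀ T : ℝ, IntegrableOn φ (Set.Ioc 0 T))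
    (hz : ∀ s : ℝ, 0 ≤ s → ∫ v in Set.Ioc 0 s, φ v = 0) :
    ∀ᵐ v ∂(volume.restrict (Set.Ioi (0:ℝ))), φ v = 0 := by
  set ψ := (Set.Ioi (0:ℝ)).indicator φ with hψ
  have hψloc : LocallyIntegrable ψ volume := by
    rw [locallyIntegrable_iff]
    intro K hK
    obtain ⟨r, hr⟩ := hK.isBounded.subset_closedBall 0
    have hsub : Set.Ioi (0:ℝ) ∩ Set.Icc (0-r) (0+r) ⊆ Set.Ioc 0 r := by
      rintro t ⟨ht0, _, htr⟩; exact ⟨ht0, by linarith⟩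
    have h1 : IntegrableOn φ (Set.Ioi 0 ∩ Set.Icc (0-r) (0+r)) volume :=
      (hloc r).mono_set hsub
    have h2 : IntegrableOn ψ (Set.Icc (0-r) (0+r)) volume := by
      rw [IntegrableOn, hψ, integrable_indicator_iff measurableSet_Ioi]
      rw [IntegrableOn, Measure.restrict_restrict measurableSet_Ioi]
      exact h1
    rw [Real.closedBall_eq_Icc] at hr
    exact h2.mono_set hr
  have key : ∀ x : ℝ, 0 < x → ∀ y, x < y → ∫ t in Set.Icc x y, ψ t = 0 := by
    intro x hx y hy
    rw [MeasureTheory.integral_Icc_eq_integral_Ioc]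
    have hsub : Set.Ioc x y ⊆ Set.Ioi 0 := fun t ht => lt_trans hx ht.1
    rw [setIntegral_congr_fun measurableSet_Ioc
      (fun t ht => Set.indicator_of_mem (hsub ht) φ)]
    have hdisj : Disjoint (Set.Ioc 0 x) (Set.Ioc x y) := Set.Ioc_disjoint_Ioc_of_le le_rfl
    have hun : Set.Ioc 0 x ∪ Set.Ioc x y = Set.Ioc 0 y :=
      Set.Ioc_union_Ioc_eq_Ioc hx.le hy.le
    have h2 := setIntegral_union hdisj measurableSet_Ioc (hloc x)
      ((hloc y).mono_set (Set.Ioc_subset_Ioc_left hx.le))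
    rw [hun, hz y (by linarith), hz x hx.le] at h2
    linarith
  have hdiff := (IsUnifLocDoublingMeasure.vitaliFamily (volume : Measure ℝ) 1).ae_tendsto_average
    hψloc
  rw [MeasureTheory.ae_restrict_iff' measurableSet_Ioi]
  filter_upwards [hdiff] with x hx hx0
  have h1 : Tendsto (fun y => ⨍ t in Set.Icc x y, ψ t) (nhdsWithin x (Set.Ioi x)) (nhds (ψ x)) :=
    hx.comp (Real.tendsto_Icc_vitaliFamily_right x)
  have h2 : Tendsto (fun y => ⨍ t in Set.Icc x y, ψ t) (nhdsWithin x (Set.Ioi x)) (nhds 0) := by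
    refine Tendsto.congr' ?_ tendsto_const_nhds
    filter_upwards [self_mem_nhdsWithin] with y hy
    rw [setAverage_eq, key x hx0 y hy, smul_zero]
  have : ψ x = 0 := tendsto_nhds_unique h1 h2
  rw [hψ, Set.indicator_of_mem hx0] at this; exact this


/-- Section of the Kiefer rate at a fixed level `x ∈ (0,1)`: among all absolutely
continuous `k : [0,1] × ℝ₊ → ℝ` (given by densities `k̇`) vanishing on the boundary
and satisfying `k(x,t) = √(x(1-x)) w(t)` for all `t ≥ 0`, the minimum of
`(1/2)∬ k̇²` equals `(1/2)∫₀^∞ ẇ²`, attained at the piecewise-linear profile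
`k(y,t) = √(x(1-x)) w(t) (y/x)` for `y ≤ x` and `√(x(1-x)) w(t) (1-y)/(1-x)` for
`y ≥ x`. -/
theorem stmt15 (x : ℝ) (hx : x ∈ Set.Ioo (0 : ℝ) 1) (w w' : ℝ → ℝ)
    (hw'int : ∀ T : ℝ, 0 ≤ T → IntegrableOn w' (Set.Icc 0 T))
    (hw'sq : IntegrableOn (fun s => (w' s) ^ 2) (Set.Ioi 0))
    (hw : ∀ s : ℝ, 0 ≤ s → w s = ∫ v in (0 : ℝ)..s, w' v) :
    -- the candidate density integrates to the prescribed trace, vanishes at `y = 1`,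
    (∀ s : ℝ, 0 ≤ s →
      (∫ u in (0 : ℝ)..x, ∫ v in (0 : ℝ)..s,
          (if u ≤ x then Real.sqrt (x * (1 - x)) * w' v / x
            else -(Real.sqrt (x * (1 - x)) * w' v / (1 - x))))
        = Real.sqrt (x * (1 - x)) * w s) ∧
    (∀ s : ℝ, 0 ≤ s →
      (∫ u in (0 : ℝ)..1, ∫ v in (0 : ℝ)..s,
          (if u ≤ x then Real.sqrt (x * (1 - x)) * w' v / x
            else -(Real.sqrt (x * (1 - x)) * w' v / (1 - x))))
        = 0) ∧
    -- achieves the value `(1/2)∫₀^∞ ẇ²`,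
    ((1 / 2) * ∫ s in Set.Ioi (0 : ℝ), ∫ y in (0 : ℝ)..1,
        (if y ≤ x then Real.sqrt (x * (1 - x)) * w' s / x
          else -(Real.sqrt (x * (1 - x)) * w' s / (1 - x))) ^ 2
      = (1 / 2) * ∫ s in Set.Ioi (0 : ℝ), (w' s) ^ 2) ∧
    -- and any admissible density with the same boundary and trace constraints has at
    -- least this energy.
    (∀ kdot : ℝ → ℝ → ℝ, Measurable (Function.uncurry kdot) →
      Integrable (fun q : ℝ × ℝ => (kdot q.1 q.2) ^ 2)
        ((volume.restrict (Set.Icc (0 : ℝ) 1)).prod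
          (volume.restrict (Set.Ioi (0 : ℝ)))) →
      (∀ s : ℝ, 0 ≤ s → (∫ u in (0 : ℝ)..1, ∫ v in (0 : ℝ)..s, kdot u v) = 0) →
      (∀ s : ℝ, 0 ≤ s →
        (∫ u in (0 : ℝ)..x, ∫ v in (0 : ℝ)..s, kdot u v)
          = Real.sqrt (x * (1 - x)) * w s) →
      (1 / 2) * ∫ s in Set.Ioi (0 : ℝ), (w' s) ^ 2
        ≤ (1 / 2) * ∫ s in Set.Ioi (0 : ℝ), ∫ y in (0 : ℝ)..1, (kdot y s) ^ 2) := by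
  obtain ⟨hx0, hx1⟩ := hx
  have hxx : 0 < x * (1 - x) := by nlinarith
  set c := Real.sqrt (x * (1 - x)) with hc
  have hc2 : c ^ 2 = x * (1 - x) := Real.sq_sqrt hxx.le
  have hw'iv : ∀ s : ℝ, 0 ≤ s → IntervalIntegrable w' volume 0 s := by
    intro s hs
    rw [intervalIntegrable_iff_integrableOn_Ioc_of_le hs]
    exact (hw'int s hs).mono_set Set.Ioc_subset_Icc_self
  -- inner integral computation
  have inner_eq : ∀ s : ℝ, 0 ≤ s → ∀ u : ℝ,
      (∫ v in (0 : ℝ)..s, (if u ≤ x then c * w' v / x else -(c * w' v / (1 - x))))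
        = (if u ≤ x then c * w s / x else -(c * w s / (1 - x))) := by
    intro s hs u
    by_cases hu : u ≤ x
    · simp only [hu, if_true]
      have : (fun v => c * w' v / x) = fun v => (c / x) * w' v := by funext v; ring
      rw [this, intervalIntegral.integral_const_mul, ← hw s hs]; ring
    · simp only [hu, if_false]
      have : (fun v => -(c * w' v / (1 - x))) = fun v => (-(c / (1 - x))) * w' v := by
        funext v; ring
      rw [this, intervalIntegral.integral_const_mul, ← hw s hs]; ring
  -- piecewise constants are interval integrable
  have hpc : ∀ (A B a b : ℝ), IntervalIntegrable (fun u => if u ≤ x then A else B) volume a b := by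
    intro A B a b
    have hm : Measurable (fun u => if u ≤ x then A else B) := by
      exact Measurable.ite measurableSet_Iic measurable_const measurable_const
    refine IntervalIntegrable.mono_fun' (g := fun _ => |A| + |B|)
      intervalIntegrable_const hm.aestronglyMeasurable
      (Filter.Eventually.of_forall fun u => ?_)
    simp only [Real.norm_eq_abs]
    split <;> [linarith [abs_nonneg B, le_abs_self A, neg_abs_le A];
      linarith [abs_nonneg A, le_abs_self B, neg_abs_le B]]
  -- value of ∫_0^x of the piecewise constant
  have first_piece : ∀ A B : ℝ, (∫ u in (0:ℝ)..x, (if u ≤ x then A else B)) = x * A := by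
    intro A B
    have heq : Set.EqOn (fun u => if u ≤ x then A else B) (fun _ => A) (Set.uIcc 0 x) := by
      intro u hu
      rw [Set.uIcc_of_le hx0.le] at hu
      simp [hu.2]
    rw [intervalIntegral.integral_congr heq, intervalIntegral.integral_const, smul_eq_mul]
    ring
  have second_piece : ∀ A B : ℝ, (∫ u in x..1, (if u ≤ x then A else B)) = (1 - x) * B := by
    intro A B
    rw [intervalIntegral.integral_of_le hx1.le,
      setIntegral_congr_fun measurableSet_Ioc (fun u hu => if_neg (not_le.2 hu.1)),
      setIntegral_const, measureReal_def, Real.volume_Ioc, ENNReal.toReal_ofReal (by linarith), smul_eq_mul]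
  have part1 : ∀ s : ℝ, 0 ≤ s →
      (∫ u in (0 : ℝ)..x, ∫ v in (0 : ℝ)..s,
          (if u ≤ x then c * w' v / x else -(c * w' v / (1 - x)))) = c * w s := by
    intro s hs
    simp_rw [inner_eq s hs]
    rw [first_piece]
    field_simp
  have part2 : ∀ s : ℝ, 0 ≤ s →
      (∫ u in (0 : ℝ)..1, ∫ v in (0 : ℝ)..s,
          (if u ≤ x then c * w' v / x else -(c * w' v / (1 - x)))) = 0 := by
    intro s hs
    simp_rw [inner_eq s hs]
    rw [← intervalIntegral.integral_add_adjacent_intervals (hpc _ _ 0 x) (hpc _ _ x 1),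
      first_piece, second_piece]
    have h1x : (1:ℝ) - x ≠ 0 := by linarith
    field_simp
    ring

  -- the squared candidate integrates to w'^2 in the space variable
  have part3_inner : ∀ s : ℝ,
      (∫ y in (0:ℝ)..1, (if y ≤ x then c * w' s / x else -(c * w' s / (1 - x))) ^ 2)
        = w' s ^ 2 := by
    intro s
    have hsq : ∀ y : ℝ, (if y ≤ x then c * w' s / x else -(c * w' s / (1 - x))) ^ 2
        = (if y ≤ x then (c * w' s / x) ^ 2 else (c * w' s / (1 - x)) ^ 2) := by
      intro y; split <;> ring
    simp_rw [hsq]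
    rw [← intervalIntegral.integral_add_adjacent_intervals (hpc _ _ 0 x) (hpc _ _ x 1),
      first_piece, second_piece]
    have h1x : (1:ℝ) - x ≠ 0 := by linarith
    field_simp
    linear_combination (w' s) ^ 2 * hc2
  refine ⟨part1, part2, ?_, ?_⟩
  · simp_rw [part3_inner]
  · intro kdot hmeas hint h1c hxc
    -- integrability of kdot on finite rectangles
    have hbase : ∀ a T : ℝ, a ≤ 1 → Integrable (Function.uncurry kdot)
        ((volume.restrict (Set.Ioc 0 a)).prod (volume.restrict (Set.Ioc 0 T))) := by
      intro a T ha
      have hsq : Integrable (fun q : ℝ × ℝ => kdot q.1 q.2 ^ 2)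
          ((volume.restrict (Set.Ioc 0 a)).prod (volume.restrict (Set.Ioc 0 T))) := by
        rw [Measure.prod_restrict]
        rw [Measure.prod_restrict] at hint
        exact hint.mono_measure (Measure.restrict_mono
          (Set.prod_mono (show Set.Ioc (0:ℝ) a ⊆ Set.Icc 0 1 from fun t ht => ⟨ht.1.le, ht.2.trans ha⟩) Set.Ioc_subset_Ioi_self)
          le_rfl)
      haveI : IsFiniteMeasure
          ((volume.restrict (Set.Ioc (0:ℝ) a)).prod (volume.restrict (Set.Ioc (0:ℝ) T))) := by
        constructor
        rw [← Set.univ_prod_univ, Measure.prod_prod, Measure.restrict_apply_univ,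
          Measure.restrict_apply_univ, Real.volume_Ioc, Real.volume_Ioc]
        exact ENNReal.mul_lt_top ENNReal.ofReal_lt_top ENNReal.ofReal_lt_top
      refine Integrable.mono' ((integrable_const 1).add hsq)
        hmeas.aestronglyMeasurable (Filter.Eventually.of_forall fun q => ?_)
      simp only [Pi.add_apply, Function.uncurry, Real.norm_eq_abs]
      nlinarith [sq_abs (kdot q.1 q.2), sq_nonneg (|kdot q.1 q.2| - 1)]
    -- Fubini for constraints
    have hswap : ∀ a : ℝ, 0 < a → a ≤ 1 → ∀ s : ℝ, 0 ≤ s →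
        (∫ u in (0:ℝ)..a, ∫ v in (0:ℝ)..s, kdot u v)
          = ∫ v in Set.Ioc 0 s, ∫ u in Set.Ioc 0 a, kdot u v := by
      intro a ha0 ha1 s hs
      rw [intervalIntegral.integral_of_le ha0.le]
      simp_rw [intervalIntegral.integral_of_le hs]
      exact MeasureTheory.integral_integral_swap (hbase a s ha1)
    have hw'loc : ∀ T : ℝ, IntegrableOn w' (Set.Ioc 0 T) := by
      intro T
      rcases le_or_gt T 0 with h | h
      · rw [Set.Ioc_eq_empty (not_lt.2 h)]
        exact integrableOn_empty
      · exact (hw'int T h.le).mono_set Set.Ioc_subset_Icc_self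
    have hg1loc : ∀ a T : ℝ, a ≤ 1 →
        IntegrableOn (fun v => ∫ u in Set.Ioc (0:ℝ) a, kdot u v) (Set.Ioc 0 T) :=
      fun a T ha => (hbase a T ha).integral_prod_right
    -- a.e. identification of the traces
    have hae1 : ∀ᵐ v ∂(volume.restrict (Set.Ioi (0:ℝ))),
        (∫ u in Set.Ioc (0:ℝ) x, kdot u v) - c * w' v = 0 := by
      refine aux_ae_zero (fun T => ((hg1loc x T hx1.le).sub ((hw'loc T).const_mul c))) ?_
      intro s hs
      rw [integral_sub (hg1loc x s hx1.le) ((hw'loc s).const_mul c), ← hswap x hx0 hx1.le s hs,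
        hxc s hs, integral_const_mul, ← intervalIntegral.integral_of_le hs, ← hw s hs, sub_self]
    have haeT : ∀ᵐ v ∂(volume.restrict (Set.Ioi (0:ℝ))),
        (∫ u in Set.Ioc (0:ℝ) 1, kdot u v) = 0 := by
      refine aux_ae_zero (fun T => hg1loc 1 T le_rfl) ?_
      intro s hs
      rw [← hswap 1 one_pos le_rfl s hs]
      exact h1c s hs
    have haeslice : ∀ᵐ v ∂(volume.restrict (Set.Ioi (0:ℝ))),
        IntegrableOn (fun u => kdot u v ^ 2) (Set.Icc (0:ℝ) 1) := hint.prod_left_ae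
    -- pointwise a.e. lower bound
    have hptwise : ∀ᵐ s ∂(volume.restrict (Set.Ioi (0:ℝ))),
        w' s ^ 2 ≤ ∫ u in Set.Icc (0:ℝ) 1, kdot u s ^ 2 := by
      filter_upwards [hae1, haeT, haeslice] with s h1e h2e hsl
      have hmk : Measurable (fun u => kdot u s) :=
        hmeas.comp (measurable_id.prodMk measurable_const)
      have hsqA : IntegrableOn (fun u => kdot u s ^ 2) (Set.Ioc 0 x) :=
        hsl.mono_set (fun t ht => ⟨ht.1.le, ht.2.trans hx1.le⟩)
      have hsqB : IntegrableOn (fun u => kdot u s ^ 2) (Set.Ioc x 1) :=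
        hsl.mono_set (fun t ht => ⟨(hx0.trans ht.1).le, ht.2⟩)
      have hA : IntegrableOn (fun u => kdot u s) (Set.Ioc 0 x) :=
        int_of_sq (by rw [Real.volume_Ioc]; exact ENNReal.ofReal_ne_top)
          hmk.aestronglyMeasurable hsqA
      have hB : IntegrableOn (fun u => kdot u s) (Set.Ioc x 1) :=
        int_of_sq (by rw [Real.volume_Ioc]; exact ENNReal.ofReal_ne_top)
          hmk.aestronglyMeasurable hsqB
      have hdisj : Disjoint (Set.Ioc (0:ℝ) x) (Set.Ioc x 1) := Set.Ioc_disjoint_Ioc_of_le le_rfl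
      have hun : Set.Ioc (0:ℝ) x ∪ Set.Ioc x 1 = Set.Ioc 0 1 :=
        Set.Ioc_union_Ioc_eq_Ioc hx0.le hx1.le
      have hsplit : ∫ u in Set.Ioc (0:ℝ) 1, kdot u s
          = (∫ u in Set.Ioc (0:ℝ) x, kdot u s) + ∫ u in Set.Ioc x 1, kdot u s := by
        rw [← hun]; exact setIntegral_union hdisj measurableSet_Ioc hA hB
      have hsplit2 : ∫ u in Set.Ioc (0:ℝ) 1, kdot u s ^ 2
          = (∫ u in Set.Ioc (0:ℝ) x, kdot u s ^ 2) + ∫ u in Set.Ioc x 1, kdot u s ^ 2 := by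
        rw [← hun]; exact setIntegral_union hdisj measurableSet_Ioc hsqA hsqB
      have hg1v : (∫ u in Set.Ioc (0:ℝ) x, kdot u s) = c * w' s := by linarith
      have hg2v : (∫ u in Set.Ioc x 1, kdot u s) = -(c * w' s) := by
        rw [h2e, hg1v] at hsplit; linarith
      have csA := cs_aux (f := fun u => kdot u s) hx0 hA hsqA
      have csB := cs_aux (f := fun u => kdot u s) hx1 hB hsqB
      rw [hg1v] at csA
      rw [hg2v] at csB
      rw [MeasureTheory.integral_Icc_eq_integral_Ioc, hsplit2]
      nlinarith [csA, csB, sq_nonneg (w' s), sq_nonneg c,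
        mul_pos hx0 (by linarith : (0:ℝ) < 1 - x)]
    have hGint : Integrable (fun s => ∫ u in Set.Icc (0:ℝ) 1, kdot u s ^ 2)
        (volume.restrict (Set.Ioi (0:ℝ))) := hint.integral_prod_right
    have hmono := integral_mono_ae hw'sq hGint hptwise
    have hrw : ∀ s : ℝ, (∫ y in (0:ℝ)..1, kdot y s ^ 2)
        = ∫ u in Set.Icc (0:ℝ) 1, kdot u s ^ 2 := fun s => by
      rw [intervalIntegral.integral_of_le zero_le_one, ← MeasureTheory.integral_Icc_eq_integral_Ioc]
    simp_rw [hrw]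
    linarith
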